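/- arXiv:1903.11445 — 2 statements merged into one kernel-verified Lean document; each statement's English description precedes it below -/
import Mathlib

section
/- For every real x > 0, let P = {(0,0), (1,0), (0,x), (1,x)} ⊂ ℝ² and let d = (√2/2, √2/2). Then w_{d⊥}(P) = (1+x)·√2/2, inf over all unit vectors u of w_{u⊥}(P) equals min(x, 1), and consequently w_{d⊥}(P) ≥ √2 · inf_{u} w_{u⊥}(P). -/
open Real
open scoped RealInnerProductSpace

noncomputable section

/-- The point of `ℝ²` with coordinates `a`, `b`. -/
def pt (a b : ℝ) : EuclideanSpace ℝ (Fin 2) :=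
  (WithLp.equiv 2 (Fin 2 → ℝ)).symm ![a, b]

/-- `v` rotated counterclockwise by `π/2`. -/
def perp (v : EuclideanSpace ℝ (Fin 2)) : EuclideanSpace ℝ (Fin 2) :=
  pt (-(v 1)) (v 0)

/-- The extent of a point set `P` along a vector `v`: `max_{p,q ∈ P} ⟨p − q, v⟩`. -/
def wext (v : EuclideanSpace ℝ (Fin 2)) (P : Set (EuclideanSpace ℝ (Fin 2))) : ℝ :=
  sSup {x : ℝ | ∃ p ∈ P, ∃ q ∈ P, x = ⟪p - q, v⟫}

lemma inner_pt (a b : ℝ) (v : EuclideanSpace ℝ (Fin 2)) : ⟪pt a b, v⟫ = a * v 0 + b * v 1 := by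
  simp [pt, PiLp.inner_apply, Fin.sum_univ_two]; ring

lemma wext_eq (x : ℝ) (hx : 0 ≤ x) (v : EuclideanSpace ℝ (Fin 2)) :
    wext v {pt 0 0, pt 1 0, pt 0 x, pt 1 x} = |v 0| + x * |v 1| := by
  set S : Set ℝ := {y : ℝ | ∃ p ∈ ({pt 0 0, pt 1 0, pt 0 x, pt 1 x} : Set _),
    ∃ q ∈ ({pt 0 0, pt 1 0, pt 0 x, pt 1 x} : Set _), y = ⟪p - q, v⟫} with hS
  have hub : ∀ y ∈ S, y ≤ |v 0| + x * |v 1| := by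
    rintro y ⟨p, hp, q, hq, rfl⟩
    simp only [Set.mem_insert_iff, Set.mem_singleton_iff] at hp hq
    rcases hp with rfl | rfl | rfl | rfl <;> rcases hq with rfl | rfl | rfl | rfl <;>
      simp only [inner_sub_left, inner_pt] <;>
      nlinarith [le_abs_self (v 0), neg_abs_le (v 0), le_abs_self (v 1), neg_abs_le (v 1),
        mul_nonneg hx (sub_nonneg.2 (le_abs_self (v 1))),
        mul_nonneg hx (sub_nonneg.2 (neg_abs_le (v 1))), abs_nonneg (v 0), abs_nonneg (v 1)]
  have hmem : (|v 0| + x * |v 1|) ∈ S := by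
    rcases le_or_gt 0 (v 0) with h0 | h0 <;> rcases le_or_gt 0 (v 1) with h1 | h1
    · exact ⟨pt 1 x, by simp, pt 0 0, by simp, by
        rw [inner_sub_left, inner_pt, inner_pt, abs_of_nonneg h0, abs_of_nonneg h1]; ring⟩
    · exact ⟨pt 1 0, by simp, pt 0 x, by simp, by
        rw [inner_sub_left, inner_pt, inner_pt, abs_of_nonneg h0, abs_of_neg h1]; ring⟩
    · exact ⟨pt 0 x, by simp, pt 1 0, by simp, by
        rw [inner_sub_left, inner_pt, inner_pt, abs_of_neg h0, abs_of_nonneg h1]; ring⟩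
    · exact ⟨pt 0 0, by simp, pt 1 x, by simp, by
        rw [inner_sub_left, inner_pt, inner_pt, abs_of_neg h0, abs_of_neg h1]; ring⟩
  exact le_antisymm (csSup_le ⟨_, hmem⟩ hub) (le_csSup ⟨_, hub⟩ hmem)

lemma unit_sq (u : EuclideanSpace ℝ (Fin 2)) (h : ‖u‖ = 1) : u 0 * u 0 + u 1 * u 1 = 1 := by
  have h2 : ⟪u, u⟫ = 1 := by rw [real_inner_self_eq_norm_sq, h]; norm_num
  rw [PiLp.inner_apply, Fin.sum_univ_two, RCLike.inner_apply, RCLike.inner_apply] at h2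
  simpa [mul_comm] using h2

lemma wext_perp (x : ℝ) (hx : 0 ≤ x) (u : EuclideanSpace ℝ (Fin 2)) :
    wext (perp u) {pt 0 0, pt 1 0, pt 0 x, pt 1 x} = |u 1| + x * |u 0| := by
  have h0 : (perp u) 0 = -(u 1) := rfl
  have h1 : (perp u) 1 = u 0 := rfl
  rw [wext_eq x hx (perp u), h0, h1, abs_neg]

/-- For `P = {(0,0), (1,0), (0,x), (1,x)}` and diagonal direction
`d = (√2/2, √2/2)`: the width of `P` in orientation `d` is `(1+x)√2/2`, the
minimum width over all unit orientations is `min x 1`, and hence the width in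
orientation `d` is at least `√2` times the minimum width. -/
theorem stmt_8 (x : ℝ) (hx : 0 < x) :
    wext (perp (pt (Real.sqrt 2 / 2) (Real.sqrt 2 / 2)))
        {pt 0 0, pt 1 0, pt 0 x, pt 1 x} = (1 + x) * Real.sqrt 2 / 2 ∧
    sInf {w : ℝ | ∃ u : EuclideanSpace ℝ (Fin 2), ‖u‖ = 1 ∧
        w = wext (perp u) {pt 0 0, pt 1 0, pt 0 x, pt 1 x}} = min x 1 ∧
    wext (perp (pt (Real.sqrt 2 / 2) (Real.sqrt 2 / 2)))
        {pt 0 0, pt 1 0, pt 0 x, pt 1 x}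
      ≥ Real.sqrt 2 * sInf {w : ℝ | ∃ u : EuclideanSpace ℝ (Fin 2), ‖u‖ = 1 ∧
          w = wext (perp u) {pt 0 0, pt 1 0, pt 0 x, pt 1 x}} := by
  have hx' : (0:ℝ) ≤ x := hx.le
  have hs2 : (0:ℝ) ≤ Real.sqrt 2 / 2 := by positivity
  -- Part 1
  have hpt0 : (pt (Real.sqrt 2 / 2) (Real.sqrt 2 / 2)) 0 = Real.sqrt 2 / 2 := rfl
  have hpt1 : (pt (Real.sqrt 2 / 2) (Real.sqrt 2 / 2)) 1 = Real.sqrt 2 / 2 := rfl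
  have part1 : wext (perp (pt (Real.sqrt 2 / 2) (Real.sqrt 2 / 2)))
      {pt 0 0, pt 1 0, pt 0 x, pt 1 x} = (1 + x) * Real.sqrt 2 / 2 := by
    rw [wext_perp x hx', hpt0, hpt1, abs_of_nonneg hs2]; ring
  -- Part 2
  set W : Set ℝ := {w : ℝ | ∃ u : EuclideanSpace ℝ (Fin 2), ‖u‖ = 1 ∧
      w = wext (perp u) {pt 0 0, pt 1 0, pt 0 x, pt 1 x}} with hW
  have hlb : ∀ w ∈ W, min x 1 ≤ w := by
    rintro w ⟨u, hu, rfl⟩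
    rw [wext_perp x hx']
    have hsq := unit_sq u hu
    have ha0 : |u 0| ≤ 1 := by nlinarith [abs_nonneg (u 0), abs_nonneg (u 1), sq_abs (u 0), sq_abs (u 1)]
    have ha1 : |u 1| ≤ 1 := by nlinarith [abs_nonneg (u 0), abs_nonneg (u 1), sq_abs (u 0), sq_abs (u 1)]
    have hm0 : (0:ℝ) ≤ min x 1 := le_min hx' zero_le_one
    have hsum : (1:ℝ) ≤ |u 0| + |u 1| := by nlinarith [sq_abs (u 0), sq_abs (u 1), abs_nonneg (u 0), abs_nonneg (u 1)]
    nlinarith [min_le_left x 1, min_le_right x 1, abs_nonneg (u 0), abs_nonneg (u 1),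
      mul_nonneg (sub_nonneg.2 (min_le_left x 1)) (abs_nonneg (u 0)),
      mul_nonneg (sub_nonneg.2 (min_le_right x 1)) (abs_nonneg (u 1)),
      mul_nonneg hm0 (sub_nonneg.2 hsum)]
  have hx_mem : x ∈ W := by
    refine ⟨pt 1 0, ?_, ?_⟩
    · have : ⟪pt 1 0, pt 1 0⟫ = (1:ℝ) := by rw [inner_pt]; norm_num [pt]
      have h2 : ‖pt 1 0‖ ^ 2 = 1 := by rw [← real_inner_self_eq_norm_sq, this]
      nlinarith [norm_nonneg (pt 1 0)]
    · rw [wext_perp x hx']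
      have e0 : (pt 1 0) 0 = (1:ℝ) := by simp [pt]
      have e1 : (pt 1 0) 1 = (0:ℝ) := by simp [pt]
      rw [e0, e1]; simp
  have h1_mem : (1:ℝ) ∈ W := by
    refine ⟨pt 0 1, ?_, ?_⟩
    · have : ⟪pt 0 1, pt 0 1⟫ = (1:ℝ) := by rw [inner_pt]; norm_num [pt]
      have h2 : ‖pt 0 1‖ ^ 2 = 1 := by rw [← real_inner_self_eq_norm_sq, this]
      nlinarith [norm_nonneg (pt 0 1)]
    · rw [wext_perp x hx']
      have e0 : (pt 0 1) 0 = (0:ℝ) := by simp [pt]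
      have e1 : (pt 0 1) 1 = (1:ℝ) := by simp [pt]
      rw [e0, e1]; simp
  have part2 : sInf W = min x 1 := by
    apply le_antisymm
    · rcases min_cases x 1 with ⟨hm, _⟩ | ⟨hm, _⟩
      · rw [hm]; exact csInf_le ⟨min x 1, hlb⟩ hx_mem
      · rw [hm]; exact csInf_le ⟨min x 1, hlb⟩ h1_mem
    · exact le_csInf ⟨x, hx_mem⟩ hlb
  refine ⟨part1, part2, ?_⟩
  rw [part1, part2]
  have h2 : Real.sqrt 2 ^ 2 = 2 := Real.sq_sqrt (by norm_num)
  nlinarith [Real.sqrt_nonneg 2, min_le_left x 1, min_le_right x 1,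
    mul_nonneg (Real.sqrt_nonneg 2) (sub_nonneg.2 (min_le_left x 1)),
    mul_nonneg (Real.sqrt_nonneg 2) (sub_nonneg.2 (min_le_right x 1))]

end
end

section
/- Let P be a finite set of points in ℝ² with diameter D > 0 attained by points p₁, p₂ ∈ P, let u = (p₁ − p₂)/D, let z = w_{u⊥}(P)/D, and let c ≥ 0 be a real constant. If β is a unit vector whose angle with the orientation of u, namely arccos(|⟨β, u⟩|), is at most (2c + 2)·arcsin(z), then w_β(P) · w_{β⊥}(P) ≤ (4c + 6) · inf over all unit vectors γ of ( w_γ(P) · w_{γ⊥}(P) ). -/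
open Real
open scoped RealInnerProductSpace

noncomputable section

/- ### Auxiliary lemmas -/

lemma inner_two (x y : EuclideanSpace ℝ (Fin 2)) : ⟪x, y⟫ = x 0 * y 0 + x 1 * y 1 := by
  simp [PiLp.inner_apply, Fin.sum_univ_two, RCLike.inner_apply, mul_comm]

lemma perp_zero (v : EuclideanSpace ℝ (Fin 2)) : perp v 0 = -(v 1) := rfl
lemma perp_one (v : EuclideanSpace ℝ (Fin 2)) : perp v 1 = v 0 := rfl

lemma norm_sq_two (x : EuclideanSpace ℝ (Fin 2)) : ‖x‖ ^ 2 = x 0 ^ 2 + x 1 ^ 2 := by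
  rw [← real_inner_self_eq_norm_sq, inner_two]; ring

lemma norm_perp (v : EuclideanSpace ℝ (Fin 2)) : ‖perp v‖ = ‖v‖ := by
  have h1 := norm_sq_two (perp v)
  have h2 := norm_sq_two v
  rw [perp_zero, perp_one] at h1
  have h3 : ‖perp v‖ ^ 2 = ‖v‖ ^ 2 := by rw [h1, h2]; ring
  calc ‖perp v‖ = Real.sqrt (‖perp v‖ ^ 2) := (Real.sqrt_sq (norm_nonneg _)).symm
    _ = Real.sqrt (‖v‖ ^ 2) := by rw [h3]
    _ = ‖v‖ := Real.sqrt_sq (norm_nonneg _)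

/-- expansion of an inner product in the orthonormal basis `γ, perp γ`. -/
lemma inner_expand {γ : EuclideanSpace ℝ (Fin 2)} (hγ : ‖γ‖ = 1)
    (m n : EuclideanSpace ℝ (Fin 2)) :
    ⟪m, n⟫ = ⟪n, γ⟫ * ⟪m, γ⟫ + ⟪n, perp γ⟫ * ⟪m, perp γ⟫ := by
  have h : γ 0 ^ 2 + γ 1 ^ 2 = 1 := by rw [← norm_sq_two, hγ]; norm_num
  simp only [inner_two, perp_zero, perp_one]
  linear_combination (-(m 0 * n 0 + m 1 * n 1)) * h

lemma inner_perp_perp (a b : EuclideanSpace ℝ (Fin 2)) : ⟪perp a, perp b⟫ = ⟪a, b⟫ := by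
  simp only [inner_two, perp_zero, perp_one]; ring

lemma inner_perp_left (a b : EuclideanSpace ℝ (Fin 2)) : ⟪perp a, b⟫ = -⟪a, perp b⟫ := by
  simp only [inner_two, perp_zero, perp_one]; ring

section wextFacts

variable {P : Set (EuclideanSpace ℝ (Fin 2))} {p₀ : EuclideanSpace ℝ (Fin 2)}

lemma wext_set_finite (hfin : P.Finite) (v : EuclideanSpace ℝ (Fin 2)) :
    {x : ℝ | ∃ p ∈ P, ∃ q ∈ P, x = ⟪p - q, v⟫}.Finite := by
  have h : {x : ℝ | ∃ p ∈ P, ∃ q ∈ P, x = ⟪p - q, v⟫} =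
      (fun pq : EuclideanSpace ℝ (Fin 2) × EuclideanSpace ℝ (Fin 2) => (⟪pq.1 - pq.2, v⟫ : ℝ)) ''
        (P ×ˢ P) := by
    ext x
    simp only [Set.mem_setOf_eq, Set.mem_image, Set.mem_prod, Prod.exists]
    constructor
    · rintro ⟨p, hp, q, hq, rfl⟩; exact ⟨p, q, ⟨hp, hq⟩, rfl⟩
    · rintro ⟨p, q, ⟨hp, hq⟩, rfl⟩; exact ⟨p, hp, q, hq, rfl⟩
  rw [h]
  exact (Set.Finite.prod hfin hfin).image _

lemma le_wext (hfin : P.Finite) {v p q : EuclideanSpace ℝ (Fin 2)} (hp : p ∈ P) (hq : q ∈ P) :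
    ⟪p - q, v⟫ ≤ wext v P :=
  le_csSup (wext_set_finite hfin v).bddAbove ⟨p, hp, q, hq, rfl⟩

lemma wext_le (hp₀ : p₀ ∈ P) {v : EuclideanSpace ℝ (Fin 2)} {B : ℝ}
    (h : ∀ p ∈ P, ∀ q ∈ P, ⟪p - q, v⟫ ≤ B) : wext v P ≤ B := by
  have hne : {x : ℝ | ∃ p ∈ P, ∃ q ∈ P, x = ⟪p - q, v⟫}.Nonempty :=
    ⟨⟪p₀ - p₀, v⟫, p₀, hp₀, p₀, hp₀, rfl⟩
  refine csSup_le hne ?_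
  rintro x ⟨p, hp, q, hq, rfl⟩
  exact h p hp q hq

lemma wext_nonneg (hfin : P.Finite) (hp₀ : p₀ ∈ P) (v : EuclideanSpace ℝ (Fin 2)) :
    0 ≤ wext v P := by
  have h := le_wext hfin hp₀ hp₀ (v := v)
  simpa using h

lemma smul_inner_le_wext (hfin : P.Finite) {v p q : EuclideanSpace ℝ (Fin 2)}
    (hp : p ∈ P) (hq : q ∈ P) (s : ℝ) :
    s * ⟪p - q, v⟫ ≤ |s| * wext v P := by
  rcases le_or_gt 0 s with hs | hs
  · rw [abs_of_nonneg hs]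
    exact mul_le_mul_of_nonneg_left (le_wext hfin hp hq) hs
  · rw [abs_of_neg hs]
    have h1 : ⟪q - p, v⟫ ≤ wext v P := le_wext hfin hq hp
    have h2 : (⟪q - p, v⟫ : ℝ) = -⟪p - q, v⟫ := by
      rw [← inner_neg_left]; congr 1; abel
    nlinarith

end wextFacts

/-- `sin` is "subhomogeneous": `sin (t * x) ≤ t * sin x` for `t ≥ 1`, `0 ≤ x`, `t * x ≤ π`. -/
lemma sin_mul_le {t x : ℝ} (ht : 1 ≤ t) (hx : 0 ≤ x) (htx : t * x ≤ π) :
    sin (t * x) ≤ t * sin x := by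
  have ht0 : 0 < t := lt_of_lt_of_le one_pos ht
  have h0 : (0 : ℝ) ∈ Set.Icc 0 π := ⟨le_rfl, pi_pos.le⟩
  have h1 : t * x ∈ Set.Icc 0 π := ⟨by positivity, htx⟩
  have hcon : (1 - 1 / t) • sin 0 + (1 / t) • sin (t * x) ≤
      sin ((1 - 1 / t) • (0 : ℝ) + (1 / t) • (t * x)) :=
    strictConcaveOn_sin_Icc.concaveOn.2 h0 h1
      (by rw [sub_nonneg]; exact div_le_one_of_le₀ ht ht0.le)
      (by positivity) (by ring)
  have heq : (1 - 1 / t) • (0 : ℝ) + (1 / t) • (t * x) = x := by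
    simp only [smul_eq_mul]; field_simp; ring
  rw [heq] at hcon
  simp only [smul_eq_mul, sin_zero, mul_zero, zero_add] at hcon
  have h2 := mul_le_mul_of_nonneg_left hcon ht0.le
  calc sin (t * x) = t * (1 / t * sin (t * x)) := by field_simp
    _ ≤ t * sin x := h2

set_option maxHeartbeats 1000000 in
/-- Lemma 14 of the paper: if the orientation `β` is within angle `(2c+2)·arcsin z`
of the diametrical orientation `u` (where `z` is the aspect ratio of the diametric
box), then the bounding box aligned with `β` has area at most `(4c+6)` times the
minimum bounding-box area. -/
theorem stmt_18 (P : Set (EuclideanSpace ℝ (Fin 2))) (hfin : P.Finite)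
    (D : ℝ) (hD : 0 < D)
    (p₁ p₂ : EuclideanSpace ℝ (Fin 2)) (hp₁ : p₁ ∈ P) (hp₂ : p₂ ∈ P)
    (hdiam : ∀ p ∈ P, ∀ q ∈ P, dist p q ≤ D) (hattain : dist p₁ p₂ = D)
    (u : EuclideanSpace ℝ (Fin 2)) (hu : u = D⁻¹ • (p₁ - p₂))
    (z : ℝ) (hz : z = wext (perp u) P / D)
    (c : ℝ) (hc : 0 ≤ c)
    (β : EuclideanSpace ℝ (Fin 2)) (hβ : ‖β‖ = 1)
    (hangle : Real.arccos |⟪β, u⟫| ≤ (2 * c + 2) * Real.arcsin z) :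
    wext β P * wext (perp β) P ≤
      (4 * c + 6) * sInf {x : ℝ | ∃ γ : EuclideanSpace ℝ (Fin 2),
        ‖γ‖ = 1 ∧ x = wext γ P * wext (perp γ) P} := by
  have hD0 : D ≠ 0 := hD.ne'
  -- basic facts about u
  have hnorm12 : ‖p₁ - p₂‖ = D := by rw [← hattain]; exact (dist_eq_norm p₁ p₂).symm
  have hun : ‖u‖ = 1 := by
    rw [hu, norm_smul, hnorm12, norm_inv, Real.norm_eq_abs, abs_of_pos hD,
      inv_mul_cancel₀ hD0]
  have hDu : p₁ - p₂ = D • u := by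
    rw [hu, smul_smul, mul_inv_cancel₀ hD0, one_smul]
  -- extent along a unit vector is at most D
  have hwle : ∀ v : EuclideanSpace ℝ (Fin 2), ‖v‖ = 1 → wext v P ≤ D := by
    intro v hv
    apply wext_le hp₁
    intro p hp q hq
    calc (⟪p - q, v⟫ : ℝ) ≤ ‖p - q‖ * ‖v‖ := real_inner_le_norm _ _
      _ = dist p q := by rw [hv, mul_one, dist_eq_norm]
      _ ≤ D := hdiam p hp q hq
  -- extent along any vector is at least D |⟪u, v⟫|
  have hwge : ∀ v : EuclideanSpace ℝ (Fin 2), D * |(⟪u, v⟫ : ℝ)| ≤ wext v P := by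
    intro v
    have h1 : ⟪p₁ - p₂, v⟫ ≤ wext v P := le_wext hfin hp₁ hp₂
    have h2 : ⟪p₂ - p₁, v⟫ ≤ wext v P := le_wext hfin hp₂ hp₁
    have e1 : (⟪p₁ - p₂, v⟫ : ℝ) = D * ⟪u, v⟫ := by
      rw [hDu, real_inner_smul_left]
    have e2 : (⟪p₂ - p₁, v⟫ : ℝ) = -(D * ⟪u, v⟫) := by
      have h3 : p₂ - p₁ = -(p₁ - p₂) := by abel
      rw [h3, inner_neg_left, e1]
    rcases abs_cases (⟪u, v⟫ : ℝ) with ⟨h, _⟩ | ⟨h, _⟩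
    · rw [h]; linarith
    · rw [h]; nlinarith
  -- z facts
  have hzD : wext (perp u) P = z * D := by rw [hz, div_mul_cancel₀ _ hD0]
  have hz0 : 0 ≤ z := by
    have h := wext_nonneg hfin hp₁ (perp u)
    rw [hz]; exact div_nonneg h hD.le
  have hz1 : z ≤ 1 := by
    have h := hwle (perp u) (by rw [norm_perp, hun])
    rw [hzD] at h
    nlinarith
  -- the inner products of β with u and perp u
  obtain ⟨a, ha⟩ : ∃ a : ℝ, a = ⟪β, u⟫ := ⟨_, rfl⟩
  obtain ⟨b, hb⟩ : ∃ b : ℝ, b = ⟪β, perp u⟫ := ⟨_, rfl⟩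
  rw [← ha] at hangle
  have hab : a ^ 2 + b ^ 2 = 1 := by
    have h := inner_expand hun β β
    rw [real_inner_self_eq_norm_sq, hβ, ← ha, ← hb] at h
    nlinarith [h]
  have ha1 : |a| ≤ 1 := by nlinarith [sq_nonneg b, sq_abs a]
  -- key angle inequality : |b| ≤ (2c+2) z
  have hkey : |b| ≤ (2 * c + 2) * z := by
    set α := Real.arcsin z with hα
    have hα0 : 0 ≤ α := Real.arcsin_nonneg.2 hz0
    have hα2 : α ≤ π / 2 := Real.arcsin_le_pi_div_two z
    have hsinα : Real.sin α = z := Real.sin_arcsin (by linarith) hz1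
    have hθ0 : 0 ≤ Real.arccos |a| := Real.arccos_nonneg _
    have hθ2 : Real.arccos |a| ≤ π / 2 := Real.arccos_le_pi_div_two.2 (abs_nonneg a)
    have hsinθ : Real.sin (Real.arccos |a|) = |b| := by
      rw [Real.sin_arccos, sq_abs]
      have h : 1 - a ^ 2 = b ^ 2 := by linarith
      rw [h, Real.sqrt_sq_eq_abs]
    have ht : (1 : ℝ) ≤ 2 * c + 2 := by linarith
    rcases le_or_gt ((2 * c + 2) * α) (π / 2) with hcase | hcase
    · have hmono : Real.sin (Real.arccos |a|) ≤ Real.sin ((2 * c + 2) * α) :=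
        Real.sin_le_sin_of_le_of_le_pi_div_two (by linarith) hcase hangle
      have hsub : Real.sin ((2 * c + 2) * α) ≤ (2 * c + 2) * Real.sin α :=
        sin_mul_le ht hα0 (by linarith [pi_pos])
      rw [hsinθ, hsinα] at *
      linarith
    · have hjordan : 2 / π * α ≤ Real.sin α := Real.mul_le_sin hα0 hα2
      have hb1 : |b| ≤ 1 := by nlinarith [sq_nonneg a, sq_abs b]
      have hπ : 0 < π := pi_pos
      have h2 : (1 : ℝ) < 2 / π * ((2 * c + 2) * α) := by
        have e : 2 / π * (π / 2) = 1 := by field_simp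
        calc (1 : ℝ) = 2 / π * (π / 2) := e.symm
          _ < 2 / π * ((2 * c + 2) * α) :=
            mul_lt_mul_of_pos_left hcase (by positivity)
      have h3 : 2 / π * ((2 * c + 2) * α) = (2 * c + 2) * (2 / π * α) := by ring
      have h4 : (2 * c + 2) * (2 / π * α) ≤ (2 * c + 2) * Real.sin α :=
        mul_le_mul_of_nonneg_left hjordan (by linarith)
      rw [hsinα] at h4
      linarith
  -- upper bound on the β-box
  have hwβ : wext β P ≤ D := hwle β hβ
  have hwβ0 : 0 ≤ wext β P := wext_nonneg hfin hp₁ β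
  have hwpβ0 : 0 ≤ wext (perp β) P := wext_nonneg hfin hp₁ (perp β)
  have hwu : wext u P ≤ D := hwle u hun
  have hwu0 : 0 ≤ wext u P := wext_nonneg hfin hp₁ u
  have hwpβ : wext (perp β) P ≤ (2 * c + 3) * (z * D) := by
    apply wext_le hp₁
    intro p hp q hq
    have hexp : (⟪p - q, perp β⟫ : ℝ) =
        ⟪perp β, u⟫ * ⟪p - q, u⟫ + ⟪perp β, perp u⟫ * ⟪p - q, perp u⟫ :=
      inner_expand hun (p - q) (perp β)
    have e1 : (⟪perp β, u⟫ : ℝ) = -b := by rw [inner_perp_left, hb]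
    have e2 : (⟪perp β, perp u⟫ : ℝ) = a := by rw [inner_perp_perp, ha]
    have b1 : (-b) * ⟪p - q, u⟫ ≤ |(-b)| * wext u P := smul_inner_le_wext hfin hp hq _
    have b2 : a * ⟪p - q, perp u⟫ ≤ |a| * wext (perp u) P := smul_inner_le_wext hfin hp hq _
    rw [abs_neg] at b1
    have c1 : |b| * wext u P ≤ ((2 * c + 2) * z) * D :=
      mul_le_mul hkey hwu hwu0 (mul_nonneg (by linarith) hz0)
    have c2 : |a| * wext (perp u) P ≤ z * D := by
      rw [hzD]
      have h := mul_le_mul_of_nonneg_right ha1 (mul_nonneg hz0 hD.le)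
      linarith
    rw [hexp, e1, e2]
    nlinarith
  -- lower bound on every element of the infimum set
  have hlower : ∀ x ∈ {x : ℝ | ∃ γ : EuclideanSpace ℝ (Fin 2),
      ‖γ‖ = 1 ∧ x = wext γ P * wext (perp γ) P}, z * D ^ 2 / 2 ≤ x := by
    rintro x ⟨γ, hγ, rfl⟩
    have hwγ0 : 0 ≤ wext γ P := wext_nonneg hfin hp₁ γ
    have hwpγ0 : 0 ≤ wext (perp γ) P := wext_nonneg hfin hp₁ (perp γ)
    have hdec : wext (perp u) P ≤
        (wext (perp γ) P / D) * wext γ P + (wext γ P / D) * wext (perp γ) P := by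
      apply wext_le hp₁
      intro p hp q hq
      have hexp : (⟪p - q, perp u⟫ : ℝ) =
          ⟪perp u, γ⟫ * ⟪p - q, γ⟫ + ⟪perp u, perp γ⟫ * ⟪p - q, perp γ⟫ :=
        inner_expand hγ (p - q) (perp u)
      have b1 : (⟪perp u, γ⟫ : ℝ) * ⟪p - q, γ⟫ ≤ |(⟪perp u, γ⟫ : ℝ)| * wext γ P :=
        smul_inner_le_wext hfin hp hq _
      have b2 : (⟪perp u, perp γ⟫ : ℝ) * ⟪p - q, perp γ⟫ ≤
          |(⟪perp u, perp γ⟫ : ℝ)| * wext (perp γ) P :=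
        smul_inner_le_wext hfin hp hq _
      have c1 : |(⟪perp u, γ⟫ : ℝ)| ≤ wext (perp γ) P / D := by
        have hge := hwge (perp γ)
        rw [inner_perp_left, abs_neg, le_div_iff₀ hD, mul_comm]
        exact hge
      have c2 : |(⟪perp u, perp γ⟫ : ℝ)| ≤ wext γ P / D := by
        have hge := hwge γ
        rw [inner_perp_perp, le_div_iff₀ hD, mul_comm]
        exact hge
      have d1 : |(⟪perp u, γ⟫ : ℝ)| * wext γ P ≤ (wext (perp γ) P / D) * wext γ P :=
        mul_le_mul_of_nonneg_right c1 hwγ0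
      have d2 : |(⟪perp u, perp γ⟫ : ℝ)| * wext (perp γ) P ≤
          (wext γ P / D) * wext (perp γ) P :=
        mul_le_mul_of_nonneg_right c2 hwpγ0
      rw [hexp]; linarith
    rw [hzD] at hdec
    have h5 : z * D * D ≤
        ((wext (perp γ) P / D) * wext γ P + (wext γ P / D) * wext (perp γ) P) * D :=
      mul_le_mul_of_nonneg_right hdec hD.le
    have h6 : ((wext (perp γ) P / D) * wext γ P + (wext γ P / D) * wext (perp γ) P) * D =
        2 * (wext γ P * wext (perp γ) P) := by
      field_simp; ring
    rw [h6] at h5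
    nlinarith
  have hne : {x : ℝ | ∃ γ : EuclideanSpace ℝ (Fin 2),
      ‖γ‖ = 1 ∧ x = wext γ P * wext (perp γ) P}.Nonempty :=
    ⟨wext u P * wext (perp u) P, u, hun, rfl⟩
  have hinf : z * D ^ 2 / 2 ≤ sInf {x : ℝ | ∃ γ : EuclideanSpace ℝ (Fin 2),
      ‖γ‖ = 1 ∧ x = wext γ P * wext (perp γ) P} :=
    le_csInf hne hlower
  -- conclude
  have hlhs : wext β P * wext (perp β) P ≤ (2 * c + 3) * (z * D ^ 2) := by
    have h := mul_le_mul hwβ hwpβ hwpβ0 hD.le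
    nlinarith
  have hrhs : (4 * c + 6) * (z * D ^ 2 / 2) ≤ (4 * c + 6) * sInf {x : ℝ |
      ∃ γ : EuclideanSpace ℝ (Fin 2), ‖γ‖ = 1 ∧ x = wext γ P * wext (perp γ) P} :=
    mul_le_mul_of_nonneg_left hinf (by linarith)
  have he : (2 * c + 3) * (z * D ^ 2) = (4 * c + 6) * (z * D ^ 2 / 2) := by ring
  linarith

end
end
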